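/- arXiv:math/0605686 — 2 statements merged into one kernel-verified Lean document; each statement's English description precedes it below -/
import Mathlib

section
/- Let α be an action of a locally compact group G on a pair (A,B) of von Neumann algebras, and suppose there exists a normal G-equivariant conditional expectation E from A onto B. Then π_B^α is (unitarily equivalent to) a subrepresentation of π_A^α; specifically, the canonical positive isometry q_E : L²(B) → L²(A) satisfying ⟨ξ, E(a)η⟩ = ⟨q_E ξ, a q_E η⟩ intertwines π_B^α and π_A^α. -/
open scoped ComplexOrder

/-- A standard form of a von Neumann algebra `M ⊆ B(H)`. -/
structure StandardForm {H : Type*} [NormedAddCommGroup H] [InnerProductSpace ℂ H]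
    [CompleteSpace H] (M : VonNeumannAlgebra H) where
  J : H ≃ₗᵢ⋆[ℂ] H
  P : Set H
  J_involutive : ∀ ξ : H, J (J ξ) = ξ
  selfDual : ∀ ξ : H, ξ ∈ P ↔ ∀ η ∈ P, 0 ≤ (inner ℂ ξ η : ℂ)
  J_fix : ∀ ξ ∈ P, J ξ = ξ
  JMJ_commutant : ∀ x ∈ M, ∃ y ∈ M.commutant, ∀ ξ : H, J (x (J ξ)) = y ξ
  commutant_JMJ : ∀ y ∈ M.commutant, ∃ x ∈ M, ∀ ξ : H, J (x (J ξ)) = y ξ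
  cone_stable : ∀ x ∈ M, ∀ ξ ∈ P, x (J (x (J ξ))) ∈ P

/-- Normality (σ-weak continuity) of a linear map on `B(H)`, expressed through convergence of
matrix coefficients of bounded sequences. -/
def IsNormalMap {H : Type*} [NormedAddCommGroup H] [InnerProductSpace ℂ H] [CompleteSpace H]
    (E : (H →L[ℂ] H) →ₗ[ℂ] (H →L[ℂ] H)) : Prop :=
  ∀ (x : ℕ → (H →L[ℂ] H)) (a : H →L[ℂ] H), Bornology.IsBounded (Set.range x) →
    (∀ ξ η : H, Filter.Tendsto (fun n => (inner ℂ ξ (x n η) : ℂ)) Filter.atTop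
      (nhds (inner ℂ ξ (a η)))) →
    ∀ ξ η : H, Filter.Tendsto (fun n => (inner ℂ ξ (E (x n) η) : ℂ)) Filter.atTop
      (nhds (inner ℂ ξ (E a η)))

section Helpers

variable {H : Type*} [NormedAddCommGroup H] [InnerProductSpace ℂ H] [CompleteSpace H]

namespace StandardForm

variable {M : VonNeumannAlgebra H} (sf : StandardForm M)

theorem inner_nonneg {ξ η : H} (hξ : ξ ∈ sf.P) (hη : η ∈ sf.P) : 0 ≤ (inner ℂ ξ η : ℂ) :=
  (sf.selfDual ξ).mp hξ η hη

theorem J_inner (ξ η : H) : (inner ℂ (sf.J ξ) (sf.J η) : ℂ) = inner ℂ η ξ := by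
  rw [← inner_conj_symm η ξ]
  rw [inner_eq_sum_norm_sq_div_four (𝕜 := ℂ), inner_eq_sum_norm_sq_div_four (𝕜 := ℂ)]
  have h1 : ‖sf.J ξ + sf.J η‖ = ‖ξ + η‖ := by rw [← map_add]; exact sf.J.norm_map _
  have h2 : ‖sf.J ξ - sf.J η‖ = ‖ξ - η‖ := by rw [← map_sub]; exact sf.J.norm_map _
  have hIs : ∀ ζ : H, (RCLike.I : ℂ) • sf.J ζ = - sf.J ((RCLike.I : ℂ) • ζ) := by
    intro ζ
    rw [sf.J.map_smulₛₗ]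
    simp [RCLike.I_to_complex, Complex.conj_I]
  have h3 : ‖sf.J ξ - (RCLike.I : ℂ) • sf.J η‖ = ‖ξ + (RCLike.I : ℂ) • η‖ := by
    rw [hIs, sub_neg_eq_add, ← map_add]; exact sf.J.norm_map _
  have h4 : ‖sf.J ξ + (RCLike.I : ℂ) • sf.J η‖ = ‖ξ - (RCLike.I : ℂ) • η‖ := by
    rw [hIs, ← sub_eq_add_neg, ← map_sub]; exact sf.J.norm_map _
  rw [h1, h2, h3, h4]
  have hI : (starRingEnd ℂ) (RCLike.I : ℂ) = - (RCLike.I : ℂ) := by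
    simp [RCLike.I_to_complex, Complex.conj_I]
  simp only [map_div₀, map_add, map_sub, map_mul, map_pow, map_ofNat, Complex.conj_ofReal,
    RCLike.conj_ofReal, hI]
  ring

theorem inner_real {ξ η : H} (hξ : sf.J ξ = ξ) (hη : sf.J η = η) :
    (inner ℂ ξ η : ℂ) = inner ℂ η ξ := by
  calc (inner ℂ ξ η : ℂ) = inner ℂ (sf.J ξ) (sf.J η) := by rw [hξ, hη]
    _ = inner ℂ η ξ := sf.J_inner ξ η

theorem inner_im_zero {ξ η : H} (hξ : sf.J ξ = ξ) (hη : sf.J η = η) :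
    (inner ℂ ξ η : ℂ).im = 0 := by
  have h := sf.inner_real hξ hη
  have hc : (starRingEnd ℂ) (inner ℂ ξ η : ℂ) = inner ℂ ξ η := by
    conv_lhs => rw [h]
    exact inner_conj_symm ξ η
  exact Complex.conj_eq_iff_im.mp hc

theorem zero_mem_P : (0 : H) ∈ sf.P :=
  (sf.selfDual 0).mpr fun η _ => by simp

theorem P_add {ξ η : H} (hξ : ξ ∈ sf.P) (hη : η ∈ sf.P) : ξ + η ∈ sf.P :=
  (sf.selfDual _).mpr fun ζ hζ => by
    rw [inner_add_left]
    exact add_nonneg (sf.inner_nonneg hξ hζ) (sf.inner_nonneg hη hζ)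

theorem P_smul {t : ℝ} (ht : 0 ≤ t) {ξ : H} (hξ : ξ ∈ sf.P) : t • ξ ∈ sf.P :=
  (sf.selfDual _).mpr fun ζ hζ => by
    have : (t : ℝ) • ξ = (t : ℂ) • ξ := by
      rw [← Complex.coe_smul]
    rw [this, inner_smul_left, Complex.conj_ofReal]
    have h0 := sf.inner_nonneg hξ hζ
    calc (0 : ℂ) = (t : ℂ) * 0 := by ring
      _ ≤ (t : ℂ) * inner ℂ ξ ζ := by
        apply mul_le_mul_of_nonneg_left h0
        exact_mod_cast ht

theorem P_closed : IsClosed sf.P := by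
  have : sf.P = ⋂ η ∈ sf.P, {ξ : H | 0 ≤ (inner ℂ ξ η : ℂ)} := by
    ext ξ; simp only [Set.mem_iInter, Set.mem_setOf_eq, sf.selfDual ξ]
  rw [this]
  refine isClosed_biInter fun η _ => ?_
  have hc : Continuous fun ξ : H => (inner ℂ ξ η : ℂ) :=
    continuous_id.inner continuous_const
  have : {ξ : H | 0 ≤ (inner ℂ ξ η : ℂ)}
      = (fun ξ : H => (inner ℂ ξ η : ℂ)) ⁻¹' {z : ℂ | 0 ≤ z.re ∧ z.im = 0} := by
    ext ξ
    simp only [Set.mem_setOf_eq, Set.mem_preimage, Complex.le_def, Complex.zero_re,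
      Complex.zero_im]
    exact ⟨fun hh => ⟨hh.1, hh.2.symm⟩, fun hh => ⟨hh.1, hh.2.symm⟩⟩
  rw [this]
  apply IsClosed.preimage hc
  exact IsClosed.inter (isClosed_le continuous_const (Complex.continuous_re))
    (isClosed_eq Complex.continuous_im continuous_const)

/-- Decomposition of a `J`-fixed vector as a difference of two orthogonal cone vectors. -/
theorem exists_decomp {ζ : H} (hζ : sf.J ζ = ζ) :
    ∃ u v : H, u ∈ sf.P ∧ v ∈ sf.P ∧ ζ = u - v ∧ (inner ℂ u v : ℂ) = 0 := by
  letI : InnerProductSpace ℝ H := InnerProductSpace.complexToReal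
  have hre : ∀ x y : H, (inner ℝ x y) = (inner ℂ x y : ℂ).re := fun _ _ => rfl
  have hconv : Convex ℝ sf.P := by
    intro x hx y hy a b ha hb _
    exact sf.P_add (sf.P_smul ha hx) (sf.P_smul hb hy)
  obtain ⟨u, huP, hmin⟩ :=
    exists_norm_eq_iInf_of_complete_convex ⟨0, sf.zero_mem_P⟩ sf.P_closed.isComplete hconv ζ
  rw [norm_eq_iInf_iff_real_inner_le_zero hconv huP] at hmin
  have hJu : sf.J u = u := sf.J_fix u huP
  set v := u - ζ with hv
  have hJv : sf.J v = v := by rw [hv, map_sub, hJu, hζ]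
  -- re ⟪v, η⟫ ≥ 0 for η ∈ P
  have hrev : ∀ η ∈ sf.P, 0 ≤ (inner ℂ v η : ℂ).re := by
    intro η hη
    have := hmin (u + η) (sf.P_add huP hη)
    rw [hre] at this
    have h1 : (inner ℂ (ζ - u) (u + η - u) : ℂ) = inner ℂ (ζ - u) η := by
      congr 1; abel
    rw [h1] at this
    have h2 : (inner ℂ v η : ℂ) = - inner ℂ (ζ - u) η := by
      rw [hv, ← inner_neg_left]; congr 1; abel
    rw [h2, Complex.neg_re]
    linarith
  have hvP : v ∈ sf.P := by
    rw [sf.selfDual]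
    intro η hη
    rw [Complex.le_def]
    constructor
    · simpa using hrev η hη
    · simp [sf.inner_im_zero hJv (sf.J_fix η hη)]
  refine ⟨u, v, huP, hvP, by rw [hv]; abel, ?_⟩
  -- orthogonality
  have h0 : (inner ℂ (ζ - u) (0 - u) : ℂ).re ≤ 0 := by
    have := hmin 0 sf.zero_mem_P; rwa [hre] at this
  have h2u : (inner ℂ (ζ - u) (u + u - u) : ℂ).re ≤ 0 := by
    have := hmin (u + u) (sf.P_add huP huP); rwa [hre] at this
  have e1 : (inner ℂ (ζ - u) (u + u - u) : ℂ) = inner ℂ (ζ - u) u := by congr 1; abel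
  have e2 : (inner ℂ (ζ - u) (0 - u) : ℂ) = - inner ℂ (ζ - u) u := by
    rw [← inner_neg_right]; congr 1; abel
  rw [e1] at h2u
  rw [e2, Complex.neg_re] at h0
  have hre0 : (inner ℂ (ζ - u) u : ℂ).re = 0 := le_antisymm h2u (by linarith)
  have hvu : (inner ℂ v u : ℂ) = - inner ℂ (ζ - u) u := by
    rw [← inner_neg_left]; congr 1; rw [hv]; abel
  rw [inner_eq_zero_symm]
  apply Complex.ext
  · rw [hvu, Complex.neg_re, hre0]; simp
  · simp [sf.inner_im_zero hJv hJu]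

end StandardForm

theorem aux_quad (S B : ℂ) (h : ∀ t : ℝ, 0 ≤ (t : ℂ) * S + ((t : ℂ)) ^ 2 * B) : S = 0 := by
  have hc : ∀ t : ℝ, 0 ≤ t * S.re + t ^ 2 * B.re ∧ t * S.im + t ^ 2 * B.im = 0 := by
    intro t
    have := h t
    rw [Complex.le_def] at this
    constructor
    · have := this.1; simpa [Complex.add_re, Complex.mul_re, Complex.ofReal_re,
        Complex.ofReal_im, pow_two] using this
    · have := this.2; simp only [Complex.zero_im] at this
      have h2 : ((t : ℂ) * S + ((t : ℂ)) ^ 2 * B).im = t * S.im + t ^ 2 * B.im := by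
        simp only [Complex.add_im, Complex.mul_im, Complex.mul_re, Complex.ofReal_re,
          Complex.ofReal_im, pow_two]
        ring
      rw [h2] at this; linarith
  -- imaginary part
  have him : S.im = 0 := by
    have h1 := (hc 1).2
    have h2 := (hc (-1)).2
    nlinarith [h1, h2]
  -- real part
  have hB : 0 ≤ B.re := by
    have h1 := (hc 1).1
    have h2 := (hc (-1)).1
    nlinarith [h1, h2]
  have habs : ∀ t : ℝ, 0 < t → |S.re| ≤ t * B.re := by
    intro t ht
    have h1 := (hc t).1
    have h2 := (hc (-t)).1
    have h2' : 0 ≤ - (t * S.re) + t ^ 2 * B.re := by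
      have : (-t) * S.re + (-t) ^ 2 * B.re = - (t * S.re) + t ^ 2 * B.re := by ring
      rw [this] at h2; exact h2
    rcases abs_cases S.re with ⟨hx, _⟩ | ⟨hx, _⟩
    · rw [hx]
      nlinarith
    · rw [hx]
      nlinarith
  have hre : S.re = 0 := by
    by_contra hS
    have habs0 : 0 < |S.re| := abs_pos.mpr hS
    have ht : 0 < |S.re| / (2 * (B.re + 1)) := by positivity
    have hle := habs _ ht
    have hlt : |S.re| / (2 * (B.re + 1)) * B.re < |S.re| := by
      rw [div_mul_eq_mul_div, div_lt_iff₀ (by linarith)]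
      nlinarith [mul_pos habs0 (by linarith : (0:ℝ) < B.re + 2)]
    linarith
  exact Complex.ext (by simp [hre]) (by simp [him])

namespace StandardForm

variable {M : VonNeumannAlgebra H} (sf : StandardForm M)

/-- Orthogonal cone vectors remain orthogonal under the commutant. -/
theorem orth_commutant {u v : H} (hu : u ∈ sf.P) (hv : v ∈ sf.P)
    (huv : (inner ℂ u v : ℂ) = 0) {y : H →L[ℂ] H} (hy : y ∈ M.commutant) :
    (inner ℂ (y u) v : ℂ) = 0 := by
  obtain ⟨x, hx, hxy⟩ := sf.commutant_JMJ y hy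
  have hvu : (inner ℂ v u : ℂ) = 0 := inner_eq_zero_symm.mp huv
  -- main quantitative step, applied to `c • x` for `c : ℂ`
  have key : ∀ (x' : H →L[ℂ] H), x' ∈ M → ∀ y' : H →L[ℂ] H,
      (∀ ξ : H, sf.J (x' (sf.J ξ)) = y' ξ) →
      (inner ℂ v (y' u) : ℂ) + inner ℂ v (x' u) = 0 := by
    intro x' hx' y' hxy'
    apply aux_quad _ (inner ℂ v (x' (y' u)) : ℂ)
    intro t
    have hz : (1 + (t : ℂ) • x') ∈ M := by
      refine add_mem (one_mem _) ?_
      exact M.toStarSubalgebra.smul_mem hx' ((t : ℂ))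
    have hcone := sf.cone_stable _ hz u hu
    have hJu : sf.J u = u := sf.J_fix u hu
    have hJxu : sf.J (x' u) = y' u := by
      have := hxy' u; rwa [hJu] at this
    have hcompute : (1 + (t : ℂ) • x') (sf.J ((1 + (t : ℂ) • x') (sf.J u)))
        = u + (t : ℂ) • y' u + ((t : ℂ) • x' u + ((t : ℂ) * (t : ℂ)) • x' (y' u)) := by
      rw [hJu]
      have h1 : (1 + (t : ℂ) • x') u = u + (t : ℂ) • x' u := by
        simp [ContinuousLinearMap.add_apply]
      rw [h1, map_add, hJu]
      have h2 : sf.J ((t : ℂ) • x' u) = (t : ℂ) • y' u := by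
        rw [sf.J.map_smulₛₗ, hJxu]
        simp [Complex.conj_ofReal]
      rw [h2]
      simp only [ContinuousLinearMap.add_apply, ContinuousLinearMap.one_apply,
        ContinuousLinearMap.smul_apply, map_add, map_smul]
      module
    rw [hcompute] at hcone
    have := sf.inner_nonneg hv hcone
    calc (0 : ℂ) ≤ inner ℂ v (u + (t : ℂ) • y' u + ((t : ℂ) • x' u + ((t : ℂ) * (t : ℂ)) • x' (y' u))) := this
      _ = (t : ℂ) * ((inner ℂ v (y' u) : ℂ) + inner ℂ v (x' u)) + ((t : ℂ)) ^ 2 * inner ℂ v (x' (y' u)) := by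
        simp only [inner_add_right, inner_smul_right, hvu]
        ring
  have k1 := key x hx y hxy
  have k2 : (inner ℂ v ((-Complex.I) • y u) : ℂ) + inner ℂ v ((Complex.I • x) u) = 0 := by
    have hx' : (Complex.I • x) ∈ M := M.toStarSubalgebra.smul_mem hx Complex.I
    have := key (Complex.I • x) hx' ((-Complex.I) • y) ?_
    · simpa using this
    · intro ξ
      simp only [ContinuousLinearMap.smul_apply]
      rw [sf.J.map_smulₛₗ, hxy ξ]
      simp [Complex.conj_I]
  simp only [ContinuousLinearMap.smul_apply, inner_smul_right] at k2
  have hy0 : (inner ℂ v (y u) : ℂ) = 0 := by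
    have e4 : (2 * Complex.I) * (inner ℂ v (y u) : ℂ) = 0 := by
      linear_combination Complex.I * k1 - k2
    have h2I : (2 * Complex.I : ℂ) ≠ 0 := by simp [Complex.I_ne_zero]
    exact (mul_eq_zero.mp e4).resolve_left h2I
  exact inner_eq_zero_symm.mp hy0

end StandardForm

namespace StandardForm

variable {M : VonNeumannAlgebra H} (sf : StandardForm M)

/-- If two cone vectors induce the same vector state on `M`, and `u - v` is an orthogonal
cone decomposition of their difference, then `u = 0`. -/
theorem decomp_eq_zero {σ τ u v : H} (hσ : σ ∈ sf.P) (hτ : τ ∈ sf.P)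
    (hu : u ∈ sf.P) (hv : v ∈ sf.P) (hdiff : σ - τ = u - v) (huv : (inner ℂ u v : ℂ) = 0)
    (hstate : ∀ a ∈ M, (inner ℂ σ (a σ) : ℂ) = inner ℂ τ (a τ)) : u = 0 := by
  classical
  set S : Set H := {w : H | ∃ y ∈ M.commutant, y u = w} with hS
  set K : Submodule ℂ H := (Submodule.span ℂ S).topologicalClosure with hK
  have hKclosed : IsClosed (K : Set H) := Submodule.isClosed_topologicalClosure _
  haveI : CompleteSpace K := hKclosed.completeSpace_coe
  set p : H →L[ℂ] H := K.subtypeL.comp (K.orthogonalProjectionOnto) with hp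
  have hp_apply : ∀ w : H, p w = (K.orthogonalProjectionOnto w : H) := fun w => rfl
  -- invariance of K under the commutant
  have hKy : ∀ y ∈ M.commutant, ∀ k ∈ K, y k ∈ K := by
    intro y hy k hk
    have hspan : ∀ w ∈ Submodule.span ℂ S, y w ∈ Submodule.span ℂ S := by
      intro w hw
      induction hw using Submodule.span_induction with
      | mem w hw =>
        obtain ⟨y', hy', rfl⟩ := hw
        apply Submodule.subset_span
        refine ⟨y * y', mul_mem hy hy', ?_⟩
        simp [ContinuousLinearMap.mul_apply]
      | zero => simp
      | add w₁ w₂ _ _ h₁ h₂ => rw [map_add]; exact add_mem h₁ h₂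
      | smul c w _ h => rw [map_smul]; exact Submodule.smul_mem _ _ h
    have hk' : k ∈ closure ((Submodule.span ℂ S : Submodule ℂ H) : Set H) := hk
    have himg : y k ∈ closure (⇑y '' ((Submodule.span ℂ S : Submodule ℂ H) : Set H)) :=
      (image_closure_subset_closure_image y.continuous) ⟨k, hk', rfl⟩
    refine closure_mono ?_ himg
    rintro w ⟨w', hw', rfl⟩
    exact hspan w' hw'
  -- p belongs to M
  have hpM : p ∈ M := by
    have : p ∈ M.commutant.commutant := by
      rw [VonNeumannAlgebra.mem_commutant_iff]
      intro y hy
      ext ζ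
      have hζdec : ζ = p ζ + (ζ - p ζ) := by abel
      have hmemK : p ζ ∈ K := by rw [hp_apply]; exact Submodule.coe_mem _
      have hmemKo : ζ - p ζ ∈ Kᗮ := K.sub_starProjection_mem_orthogonal ζ
      have hyKo : y (ζ - p ζ) ∈ Kᗮ := by
        rw [Submodule.mem_orthogonal]
        intro k hk
        have hsk : (star y) k ∈ K := by
          refine hKy (star y) (star_mem hy) k hk
        have : (inner ℂ ((star y) k) (ζ - p ζ) : ℂ) = 0 :=
          (Submodule.mem_orthogonal K _).mp hmemKo _ hsk
        rw [← this, ContinuousLinearMap.star_eq_adjoint, ContinuousLinearMap.adjoint_inner_left]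
      have h1 : p (y (p ζ)) = y (p ζ) := by
        rw [hp_apply]
        exact K.starProjection_eq_self_iff.mpr (hKy y hy _ hmemK)
      have h2 : p (y (ζ - p ζ)) = 0 := by
        rw [hp_apply]
        rw [Submodule.orthogonalProjectionOnto_apply_of_mem_orthogonal hyKo]
        simp
      calc (y * p) ζ = y (p ζ) := rfl
        _ = p (y (p ζ)) + p (y (ζ - p ζ)) := by rw [h1, h2, add_zero]
        _ = p (y (p ζ) + y (ζ - p ζ)) := (map_add p _ _).symm
        _ = p (y (p ζ + (ζ - p ζ))) := by rw [map_add y]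
        _ = p (y ζ) := by rw [← hζdec]
        _ = (p * y) ζ := rfl
    rwa [VonNeumannAlgebra.commutant_commutant] at this
  -- p u = u
  have hpu : p u = u := by
    have huK : u ∈ K := by
      apply Submodule.le_topologicalClosure
      apply Submodule.subset_span
      exact ⟨1, one_mem _, by simp⟩
    rw [hp_apply]
    exact K.starProjection_eq_self_iff.mpr huK
  -- p v = 0
  have hpv : p v = 0 := by
    have hvKo : v ∈ Kᗮ := by
      rw [Submodule.mem_orthogonal]
      intro k hk
      have hset : ((Submodule.span ℂ S : Submodule ℂ H) : Set H) ⊆ {w : H | (inner ℂ w v : ℂ) = 0} := by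
        intro w hw
        induction hw using Submodule.span_induction with
        | mem w hw =>
          obtain ⟨y', hy', rfl⟩ := hw
          exact sf.orth_commutant hu hv huv hy'
        | zero => simp
        | add w₁ w₂ _ _ h₁ h₂ =>
          simp only [Set.mem_setOf_eq] at h₁ h₂ ⊢
          rw [inner_add_left, h₁, h₂, add_zero]
        | smul c w _ h =>
          simp only [Set.mem_setOf_eq] at h ⊢
          rw [inner_smul_left, h, mul_zero]
      have hclosed : IsClosed {w : H | (inner ℂ w v : ℂ) = 0} :=
        isClosed_eq (continuous_id.inner continuous_const) continuous_const
      have : (K : Set H) ⊆ {w : H | (inner ℂ w v : ℂ) = 0} :=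
        closure_minimal hset hclosed
      exact this hk
    rw [hp_apply]
    rw [Submodule.orthogonalProjectionOnto_apply_of_mem_orthogonal hvKo]
    simp
  -- conclude
  have hps : (inner ℂ σ (p σ) : ℂ) = inner ℂ τ (p τ) := hstate p hpM
  have hselfadj : ∀ x y : H, (inner ℂ (p x) y : ℂ) = inner ℂ x (p y) := by
    intro x y
    rw [hp_apply, hp_apply]
    exact K.inner_starProjection_left_eq_right x y
  have hpd : p (σ - τ) = u := by rw [hdiff, map_sub, hpu, hpv, sub_zero]
  have hkey : (inner ℂ σ u : ℂ) + inner ℂ u τ = 0 := by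
    have e1 : (inner ℂ σ (p σ) : ℂ) - inner ℂ τ (p τ)
        = inner ℂ σ (p (σ - τ)) + inner ℂ (σ - τ) (p τ) := by
      rw [map_sub, inner_sub_right, inner_sub_left]
      ring
    rw [hps, sub_self] at e1
    rw [hpd] at e1
    have e2 : (inner ℂ (σ - τ) (p τ) : ℂ) = inner ℂ (p (σ - τ)) τ := by
      rw [hselfadj]
    rw [e2, hpd] at e1
    exact e1.symm
  have h1 : 0 ≤ (inner ℂ σ u : ℂ) := sf.inner_nonneg hσ hu
  have h2 : 0 ≤ (inner ℂ u τ : ℂ) := sf.inner_nonneg hu hτ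
  rw [Complex.le_def] at h1 h2
  simp only [Complex.zero_re, Complex.zero_im] at h1 h2
  have hσu : (inner ℂ σ u : ℂ) = 0 := by
    apply Complex.ext
    · have := congrArg Complex.re hkey
      simp only [Complex.add_re, Complex.zero_re] at this
      simp only [Complex.zero_re]
      linarith [h1.1, h2.1]
    · simp only [Complex.zero_im]; linarith [h1.2]
  have huτ : (inner ℂ u τ : ℂ) = 0 := by
    rw [hσu, zero_add] at hkey; exact hkey
  have huσ : (inner ℂ u σ : ℂ) = 0 := inner_eq_zero_symm.mp hσu
  have : (inner ℂ u u : ℂ) = 0 := by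
    have : (inner ℂ u u : ℂ) = inner ℂ u (σ - τ) + inner ℂ u v := by
      rw [hdiff, inner_sub_right]
      ring
    rw [this, inner_sub_right, huσ, huτ, huv]
    ring
  exact inner_self_eq_zero.mp this

/-- Two cone vectors inducing the same vector state on `M` coincide. -/
theorem state_eq {σ τ : H} (hσ : σ ∈ sf.P) (hτ : τ ∈ sf.P)
    (hstate : ∀ a ∈ M, (inner ℂ σ (a σ) : ℂ) = inner ℂ τ (a τ)) : σ = τ := by
  have hJ : sf.J (σ - τ) = σ - τ := by
    rw [map_sub, sf.J_fix σ hσ, sf.J_fix τ hτ]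
  obtain ⟨u, v, hu, hv, hdiff, huv⟩ := sf.exists_decomp hJ
  have hu0 : u = 0 := sf.decomp_eq_zero hσ hτ hu hv hdiff huv hstate
  have hvu : (inner ℂ v u : ℂ) = 0 := inner_eq_zero_symm.mp huv
  have hdiff' : τ - σ = v - u := by
    rw [← neg_sub σ τ, hdiff, neg_sub]
  have hv0 : v = 0 := sf.decomp_eq_zero hτ hσ hv hu hdiff' hvu
    (fun a ha => (hstate a ha).symm)
  have : σ - τ = 0 := by rw [hdiff, hu0, hv0, sub_zero]
  exact sub_eq_zero.mp this

/-- Every vector is a linear combination of cone vectors. -/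
theorem span_cone (ξ : H) :
    ∃ u₁ v₁ u₂ v₂ : H, u₁ ∈ sf.P ∧ v₁ ∈ sf.P ∧ u₂ ∈ sf.P ∧ v₂ ∈ sf.P ∧
      ξ = (u₁ - v₁) + Complex.I • (u₂ - v₂) := by
  set ζ₁ : H := (2⁻¹ : ℂ) • (ξ + sf.J ξ) with hζ₁
  set ζ₂ : H := ((-(2⁻¹) * Complex.I : ℂ)) • (ξ - sf.J ξ) with hζ₂
  have hJζ₁ : sf.J ζ₁ = ζ₁ := by
    rw [hζ₁, sf.J.map_smulₛₗ, map_add, sf.J_involutive]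
    have hc : (starRingEnd ℂ) (2⁻¹ : ℂ) = (2⁻¹ : ℂ) := by
      rw [show (2⁻¹ : ℂ) = ((2⁻¹ : ℝ) : ℂ) by norm_num]
      exact Complex.conj_ofReal _
    rw [hc]
    congr 1
    abel
  have hJζ₂ : sf.J ζ₂ = ζ₂ := by
    rw [hζ₂, sf.J.map_smulₛₗ, map_sub, sf.J_involutive]
    have hc : (starRingEnd ℂ) ((-(2⁻¹) * Complex.I : ℂ)) = (2⁻¹ : ℂ) * Complex.I := by
      rw [map_mul, map_neg, Complex.conj_I,
        show (2⁻¹ : ℂ) = ((2⁻¹ : ℝ) : ℂ) by norm_num, Complex.conj_ofReal]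
      ring
    rw [hc]
    module
  have hsum : ξ = ζ₁ + Complex.I • ζ₂ := by
    have hc : Complex.I • ζ₂ = (2⁻¹ : ℂ) • (ξ - sf.J ξ) := by
      rw [hζ₂, smul_smul]
      congr 1
      linear_combination (-(2⁻¹ : ℂ)) * Complex.I_mul_I
    rw [hc, hζ₁]
    module
  obtain ⟨u₁, v₁, hu₁, hv₁, hd₁, _⟩ := sf.exists_decomp hJζ₁
  obtain ⟨u₂, v₂, hu₂, hv₂, hd₂, _⟩ := sf.exists_decomp hJζ₂
  exact ⟨u₁, v₁, u₂, v₂, hu₁, hv₁, hu₂, hv₂, by rw [hsum, hd₁, hd₂]⟩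

end StandardForm

end Helpers

/-- If there is a normal `G`-equivariant conditional expectation `E` from `A`
onto `B`, then the canonical positive isometry `q_E : L²(B) → L²(A)` (characterized by
`⟨ξ, E(a)η⟩ = ⟨q_E ξ, a q_E η⟩`) intertwines `π_B^α` and `π_A^α`; in particular `π_B^α` is a
subrepresentation of `π_A^α`. -/
theorem condexp_isometry_intertwines
    {G : Type*} [Group G] [TopologicalSpace G] [IsTopologicalGroup G] [LocallyCompactSpace G]
    {HA HB : Type*}
    [NormedAddCommGroup HA] [InnerProductSpace ℂ HA] [CompleteSpace HA]
    [NormedAddCommGroup HB] [InnerProductSpace ℂ HB] [CompleteSpace HB]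
    (A : VonNeumannAlgebra HA) (B : VonNeumannAlgebra HA)
    (hBA : ∀ x : HA →L[ℂ] HA, x ∈ B → x ∈ A)
    (sfA : StandardForm A)
    (B' : VonNeumannAlgebra HB) (sfB : StandardForm B')
    -- Φ is a normal *-isomorphism of B onto B', identifying the standard form of B on HB
    (Φ : (HA →L[ℂ] HA) → (HB →L[ℂ] HB))
    (hΦ_one : Φ 1 = 1)
    (hΦ_add : ∀ b₁ ∈ B, ∀ b₂ ∈ B, Φ (b₁ + b₂) = Φ b₁ + Φ b₂)
    (hΦ_smul : ∀ c : ℂ, ∀ b ∈ B, Φ (c • b) = c • Φ b)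
    (hΦ_mul : ∀ b₁ ∈ B, ∀ b₂ ∈ B, Φ (b₁ * b₂) = Φ b₁ * Φ b₂)
    (hΦ_star : ∀ b ∈ B, Φ (star b) = star (Φ b))
    (hΦ_mem : ∀ b ∈ B, Φ b ∈ B')
    (hΦ_surj : ∀ y : HB →L[ℂ] HB, y ∈ B' → ∃ b ∈ B, Φ b = y)
    (hΦ_inj : ∀ b₁ ∈ B, ∀ b₂ ∈ B, Φ b₁ = Φ b₂ → b₁ = b₂)
    -- π_A^α and π_B^α : the canonical implementations of the action on L²(A) and L²(B)
    (πA : G →* (HA →L[ℂ] HA))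
    (hπAu : ∀ s, ContinuousLinearMap.adjoint (πA s) = πA s⁻¹)
    (hπAc : ∀ ξ : HA, Continuous fun s => πA s ξ)
    (hπAP : ∀ s : G, ∀ ξ ∈ sfA.P, πA s ξ ∈ sfA.P)
    (hπAJ : ∀ (s : G) (ξ : HA), πA s (sfA.J ξ) = sfA.J (πA s ξ))
    (hπA_A : ∀ s : G, ∀ a ∈ A, πA s * a * πA s⁻¹ ∈ A)
    (hπA_B : ∀ s : G, ∀ b ∈ B, πA s * b * πA s⁻¹ ∈ B)
    (πB : G →* (HB →L[ℂ] HB))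
    (hπBu : ∀ s, ContinuousLinearMap.adjoint (πB s) = πB s⁻¹)
    (hπBc : ∀ ξ : HB, Continuous fun s => πB s ξ)
    (hπBP : ∀ s : G, ∀ ξ ∈ sfB.P, πB s ξ ∈ sfB.P)
    (hπBJ : ∀ (s : G) (ξ : HB), πB s (sfB.J ξ) = sfB.J (πB s ξ))
    (hcompat : ∀ s : G, ∀ b ∈ B, Φ (πA s * b * πA s⁻¹) = πB s * Φ b * πB s⁻¹)
    -- E is a normal G-equivariant conditional expectation from A onto B
    (E : (HA →L[ℂ] HA) →ₗ[ℂ] (HA →L[ℂ] HA))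
    (hE_mem : ∀ a ∈ A, E a ∈ B)
    (hE_fix : ∀ b ∈ B, E b = b)
    (hE_pos : ∀ a : HA →L[ℂ] HA, a.IsPositive → (E a).IsPositive)
    (hE_norm : ∀ a : HA →L[ℂ] HA, ‖E a‖ ≤ ‖a‖)
    (hE_bimod : ∀ b₁ ∈ B, ∀ b₂ ∈ B, ∀ a ∈ A, E (b₁ * a * b₂) = b₁ * E a * b₂)
    (hE_normal : IsNormalMap E)
    (hE_equiv : ∀ (s : G) (a : HA →L[ℂ] HA), E (πA s * a * πA s⁻¹) = πA s * E a * πA s⁻¹)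
    -- q is the canonical positive isometry q_E : L²(B) → L²(A) associated with E
    (q : HB →L[ℂ] HA)
    (hq_pos : ∀ ξ ∈ sfB.P, q ξ ∈ sfA.P)
    (hq_isom : ∀ ξ : HB, ‖q ξ‖ = ‖ξ‖)
    (hq_def : ∀ a ∈ A, ∀ ξ η : HB, (inner ℂ ξ (Φ (E a) η) : ℂ) = inner ℂ (q ξ) (a (q η))) :
    ∀ (s : G) (ξ : HB), q (πB s ξ) = πA s (q ξ) := by
  intro s ξ
  have hπBinv : ∀ (t : G) (w : HB), πB t⁻¹ (πB t w) = w := by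
    intro t w
    have h : πB t⁻¹ * πB t = 1 := by rw [← map_mul, inv_mul_cancel, map_one]
    calc πB t⁻¹ (πB t w) = (πB t⁻¹ * πB t) w := rfl
      _ = w := by rw [h]; rfl
  have hπAinv : ∀ (t : G) (w : HA), πA t (πA t⁻¹ w) = w := by
    intro t w
    have h : πA t * πA t⁻¹ = 1 := by rw [← map_mul, mul_inv_cancel, map_one]
    calc πA t (πA t⁻¹ w) = (πA t * πA t⁻¹) w := rfl
      _ = w := by rw [h]; rfl
  have key : ∀ ζ ∈ sfB.P, q (πB s ζ) = πA s (q ζ) := by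
    intro ζ hζ
    set σ := q ζ with hσ
    set τ := πA s⁻¹ (q (πB s ζ)) with hτ
    have hσP : σ ∈ sfA.P := hq_pos ζ hζ
    have hτP : τ ∈ sfA.P := hπAP s⁻¹ _ (hq_pos _ (hπBP s ζ hζ))
    have hstate : ∀ a ∈ A, (inner ℂ σ (a σ) : ℂ) = inner ℂ τ (a τ) := by
      intro a ha
      have h1 : (inner ℂ σ (a σ) : ℂ) = inner ℂ ζ ((Φ (E a)) ζ) := (hq_def a ha ζ ζ).symm
      have h2 : (inner ℂ τ (a τ) : ℂ)
          = inner ℂ (q (πB s ζ)) ((πA s * a * πA s⁻¹) (q (πB s ζ))) := by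
        rw [hτ]
        have := ContinuousLinearMap.adjoint_inner_left (πA s)
          (a (πA s⁻¹ (q (πB s ζ)))) (q (πB s ζ))
        rw [hπAu s] at this
        simpa [ContinuousLinearMap.mul_apply] using this
      have h3 : (inner ℂ (q (πB s ζ)) ((πA s * a * πA s⁻¹) (q (πB s ζ))) : ℂ)
          = inner ℂ (πB s ζ) ((Φ (E (πA s * a * πA s⁻¹))) (πB s ζ)) :=
        (hq_def _ (hπA_A s a ha) _ _).symm
      have h4 : Φ (E (πA s * a * πA s⁻¹)) = πB s * Φ (E a) * πB s⁻¹ := by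
        rw [hE_equiv s a, hcompat s (E a) (hE_mem a ha)]
      have h5 : (inner ℂ (πB s ζ) ((πB s * Φ (E a) * πB s⁻¹) (πB s ζ)) : ℂ)
          = inner ℂ ζ ((Φ (E a)) ζ) := by
        have e1 : (πB s * Φ (E a) * πB s⁻¹) (πB s ζ) = πB s ((Φ (E a)) ζ) := by
          show πB s ((Φ (E a)) (πB s⁻¹ (πB s ζ))) = _
          rw [hπBinv s ζ]
        rw [e1]
        calc (inner ℂ (πB s ζ) (πB s ((Φ (E a)) ζ)) : ℂ)
            = inner ℂ (πB s⁻¹ (πB s ζ)) ((Φ (E a)) ζ) := by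
              have e3 := ContinuousLinearMap.adjoint_inner_right (πB s⁻¹) (πB s ζ) ((Φ (E a)) ζ)
              rw [hπBu s⁻¹, inv_inv] at e3
              exact e3
          _ = inner ℂ ζ ((Φ (E a)) ζ) := by rw [hπBinv s ζ]
      rw [h1, h2, h3, h4, h5]
    have hστ : σ = τ := sfA.state_eq hσP hτP hstate
    calc q (πB s ζ) = πA s τ := (hπAinv s (q (πB s ζ))).symm
      _ = πA s σ := by rw [hστ]
      _ = πA s (q ζ) := rfl
  obtain ⟨u₁, v₁, u₂, v₂, hu₁, hv₁, hu₂, hv₂, hdec⟩ := sfB.span_cone ξ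
  have k1 := key u₁ hu₁
  have k2 := key v₁ hv₁
  have k3 := key u₂ hu₂
  have k4 := key v₂ hv₂
  rw [hdec]
  simp only [map_add, map_sub, map_smul]
  rw [k1, k2, k3, k4]
end

section
/- Let (A, G, α) be a von Neumann dynamical system. Then π_A^α has a nonzero G-invariant vector if and only if there is a normal G-invariant state on A. -/
open scoped ComplexOrder

namespace StandardFormAux

open ContinuousLinearMap

variable {H : Type*} [NormedAddCommGroup H] [InnerProductSpace ℂ H] [CompleteSpace H]
variable {A : VonNeumannAlgebra H} (sf : StandardForm A)

lemma J_re_inner (u v : H) : (inner ℂ (sf.J u) (sf.J v) : ℂ).re = (inner ℂ u v : ℂ).re := by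
  have h1 := norm_add_sq (𝕜 := ℂ) (sf.J u) (sf.J v)
  have h2 := norm_add_sq (𝕜 := ℂ) u v
  have e : sf.J u + sf.J v = sf.J (u + v) := (map_add _ _ _).symm
  rw [e] at h1
  simp only [sf.J.norm_map] at h1
  have hre : RCLike.re (inner ℂ (sf.J u) (sf.J v) : ℂ) = RCLike.re (inner ℂ u v : ℂ) := by
    nlinarith [h1, h2]
  simpa using hre

lemma J_inner (u v : H) : (inner ℂ (sf.J u) (sf.J v) : ℂ) = inner ℂ v u := by
  apply Complex.ext
  · rw [J_re_inner]
    have : (inner ℂ v u : ℂ) = starRingEnd ℂ (inner ℂ u v : ℂ) := (inner_conj_symm v u).symm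
    rw [this, Complex.conj_re]
  · -- imaginary parts
    have h1 : (inner ℂ (sf.J ((-Complex.I) • u)) (sf.J v) : ℂ).re
        = (inner ℂ ((-Complex.I) • u) v : ℂ).re := J_re_inner sf _ v
    have e : sf.J ((-Complex.I) • u) = Complex.I • sf.J u := by
      rw [sf.J.map_smulₛₗ]
      simp
    rw [e] at h1
    rw [inner_smul_left, inner_smul_left] at h1
    simp only [Complex.mul_re, Complex.conj_re, Complex.conj_im] at h1
    have hconj : (inner ℂ v u : ℂ) = starRingEnd ℂ (inner ℂ u v : ℂ) := (inner_conj_symm v u).symm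
    rw [hconj, Complex.conj_im]
    simp [Complex.I_re, Complex.I_im, Complex.neg_re, Complex.neg_im] at h1 ⊢
    linarith

lemma inner_im_zero_of_fix {u v : H} (hu : sf.J u = u) (hv : sf.J v = v) :
    (inner ℂ u v : ℂ).im = 0 := by
  have := J_inner sf u v
  rw [hu, hv] at this
  have h2 : (inner ℂ v u : ℂ) = starRingEnd ℂ (inner ℂ u v : ℂ) := (inner_conj_symm v u).symm
  rw [h2] at this
  have := congrArg Complex.im this
  simp only [Complex.conj_im] at this
  linarith

lemma inner_nonneg {u v : H} (hu : u ∈ sf.P) (hv : v ∈ sf.P) : 0 ≤ (inner ℂ u v : ℂ) :=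
  (sf.selfDual u).1 hu v hv

lemma zero_mem : (0 : H) ∈ sf.P := by
  rw [sf.selfDual]
  intro η _
  simp

lemma smul_mem {u : H} (hu : u ∈ sf.P) {r : ℝ} (hr : 0 ≤ r) : r • u ∈ sf.P := by
  rw [sf.selfDual]
  intro η hη
  have : (inner ℂ (r • u) η : ℂ) = (r : ℂ) * inner ℂ u η := by
    rw [← Complex.coe_smul, inner_smul_left]
    simp
  rw [this]
  exact mul_nonneg (by exact_mod_cast Complex.zero_le_real.2 hr) (inner_nonneg sf hu hη)

lemma add_mem {u v : H} (hu : u ∈ sf.P) (hv : v ∈ sf.P) : u + v ∈ sf.P := by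
  rw [sf.selfDual]
  intro η hη
  rw [inner_add_left]
  exact add_nonneg (inner_nonneg sf hu hη) (inner_nonneg sf hv hη)

lemma convex : Convex ℝ sf.P := by
  intro x hx y hy a b ha hb _
  exact add_mem sf (smul_mem sf hx ha) (smul_mem sf hy hb)

lemma isClosed : IsClosed sf.P := by
  have : sf.P = ⋂ η ∈ sf.P, {ξ : H | 0 ≤ (inner ℂ ξ η : ℂ)} := by
    ext ξ
    simp only [Set.mem_iInter, Set.mem_setOf_eq]
    exact sf.selfDual ξ
  rw [this]
  refine isClosed_biInter fun η _ => ?_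
  have : {ξ : H | 0 ≤ (inner ℂ ξ η : ℂ)}
      = {ξ : H | 0 ≤ (inner ℂ ξ η : ℂ).re} ∩ {ξ : H | (0:ℝ) = (inner ℂ ξ η : ℂ).im} := by
    ext ξ
    simp [Complex.le_def, eq_comm]
  rw [this]
  have hcont : Continuous fun ξ : H => (inner ℂ ξ η : ℂ) :=
    continuous_id.inner continuous_const
  exact (isClosed_le continuous_const (Complex.continuous_re.comp hcont)).inter
    (isClosed_eq continuous_const (Complex.continuous_im.comp hcont))

end StandardFormAux

namespace StandardFormAux

open ContinuousLinearMap

variable {H : Type*} [NormedAddCommGroup H] [InnerProductSpace ℂ H] [CompleteSpace H]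
variable {A : VonNeumannAlgebra H} (sf : StandardForm A)

lemma quad_nonneg {b c : ℝ} (hc : 0 ≤ c) (h : ∀ t : ℝ, 0 ≤ t * b + t ^ 2 * c) : b = 0 := by
  have hc1 : (0:ℝ) < c + 1 := by linarith
  have ht := h (-b / (c + 1))
  have : -b / (c + 1) * b + (-b / (c + 1)) ^ 2 * c = -(b ^ 2) / (c + 1) ^ 2 := by
    field_simp
    ring
  rw [this] at ht
  have h2 : b ^ 2 ≤ 0 := by
    have := mul_nonneg ht (le_of_lt (pow_pos hc1 2))
    have h3 : -(b ^ 2) / (c + 1) ^ 2 * (c + 1) ^ 2 = -(b ^ 2) := by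
      field_simp
    nlinarith [pow_pos hc1 2]
  nlinarith [sq_nonneg b]

lemma orth {ζp ζm : H} (hp : ζp ∈ sf.P) (hm : ζm ∈ sf.P)
    (h0 : (inner ℂ ζp ζm : ℂ) = 0) : ∀ x ∈ A, (inner ℂ (x ζp) ζm : ℂ) = 0 := by
  have hJp : sf.J ζp = ζp := sf.J_fix ζp hp
  have hJm : sf.J ζm = ζm := sf.J_fix ζm hm
  have key : ∀ x ∈ A, (inner ℂ ((x : H →L[ℂ] H) ζp) ζm : ℂ).re = 0 := by
    intro x hx
    set w : ℂ := inner ℂ (x ζp) ζm with hw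
    set c : ℂ := inner ℂ (x (sf.J (x ζp))) ζm with hcdef
    have hc : 0 ≤ c := by
      have := sf.cone_stable x hx ζp hp
      rw [hJp] at this
      exact inner_nonneg sf this hm
    have hquad : ∀ t : ℝ, 0 ≤ t * (2 * w.re) + t ^ 2 * c.re := by
      intro t
      have hat : (1 + (t : ℂ) • x) ∈ A := by
        exact A.toStarSubalgebra.add_mem (A.toStarSubalgebra.one_mem) (A.toStarSubalgebra.smul_mem hx _)
      have hu := sf.cone_stable _ hat ζp hp
      have hval : 0 ≤ (inner ℂ ((1 + (t:ℂ) • x) (sf.J ((1 + (t:ℂ) • x) (sf.J ζp)))) ζm : ℂ) :=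
        inner_nonneg sf hu hm
      have e1 : (1 + (t:ℂ) • x) (sf.J ζp) = ζp + (t:ℂ) • (x ζp) := by
        rw [hJp]; simp [ContinuousLinearMap.add_apply]
      have e2 : sf.J (ζp + (t:ℂ) • (x ζp)) = ζp + (t:ℂ) • sf.J (x ζp) := by
        rw [map_add, sf.J.map_smulₛₗ, hJp]
        simp [Complex.conj_ofReal]
      have e3 : (1 + (t:ℂ) • x) (ζp + (t:ℂ) • sf.J (x ζp))
          = ζp + (t:ℂ) • sf.J (x ζp) + (t:ℂ) • (x ζp) + ((t:ℂ) * (t:ℂ)) • (x (sf.J (x ζp))) := by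
        simp only [ContinuousLinearMap.add_apply, ContinuousLinearMap.one_apply,
          ContinuousLinearMap.smul_apply, map_add, map_smul, smul_smul, smul_add]
        abel
      rw [e1, e2, e3] at hval
      have hexp : (inner ℂ (ζp + (t:ℂ) • sf.J (x ζp) + (t:ℂ) • (x ζp)
            + ((t:ℂ) * (t:ℂ)) • (x (sf.J (x ζp)))) ζm : ℂ)
          = (t:ℂ) * (starRingEnd ℂ w + w) + ((t:ℂ) * (t:ℂ)) * c := by
        rw [inner_add_left, inner_add_left, inner_add_left, h0,
          inner_smul_left, inner_smul_left, inner_smul_left]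
        have hJw : (inner ℂ (sf.J (x ζp)) ζm : ℂ) = starRingEnd ℂ w := by
          rw [← hJm, J_inner, hw, ← inner_conj_symm]
        rw [hJw, ← hw, ← hcdef]
        simp [Complex.conj_ofReal]
        ring
      rw [hexp] at hval
      have hre := hval.1
      have him := hval.2
      simp only [Complex.add_re, Complex.mul_re, Complex.mul_im, Complex.ofReal_re,
        Complex.ofReal_im, Complex.add_im, Complex.conj_re, Complex.conj_im,
        Complex.zero_re] at hre
      nlinarith [hre]
    have hcre : (0:ℝ) ≤ c.re := hc.1
    have := quad_nonneg hcre hquad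
    linarith
  intro x hx
  have h1 : (inner ℂ ((x : H →L[ℂ] H) ζp) ζm : ℂ).re = 0 := key x hx
  have h2 : (inner ℂ ((Complex.I • x) ζp) ζm : ℂ).re = 0 :=
    key _ (A.toStarSubalgebra.smul_mem hx _)
  have e : (inner ℂ ((Complex.I • x) ζp) ζm : ℂ) = -Complex.I * inner ℂ (x ζp) ζm := by
    rw [ContinuousLinearMap.smul_apply, inner_smul_left]
    simp
  rw [e] at h2
  simp only [Complex.mul_re, Complex.neg_re, Complex.I_re, Complex.neg_im, Complex.I_im] at h2
  apply Complex.ext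
  · exact h1
  · simpa using h2

lemma orth' {ζp ζm : H} (hp : ζp ∈ sf.P) (hm : ζm ∈ sf.P)
    (h0 : (inner ℂ ζp ζm : ℂ) = 0) : ∀ y ∈ A.commutant, (inner ℂ (y ζp) ζm : ℂ) = 0 := by
  intro y hy
  obtain ⟨x, hx, hxy⟩ := sf.commutant_JMJ y hy
  have e : y ζp = sf.J (x ζp) := by
    rw [← hxy ζp, sf.J_fix ζp hp]
  rw [e, ← sf.J_fix ζm hm, J_inner, ← inner_conj_symm, orth sf hp hm h0 x hx, map_zero]

lemma moreau {ζ : H} (hζ : sf.J ζ = ζ) :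
    ∃ v ∈ sf.P, (∀ w ∈ sf.P, ((inner ℂ (ζ - v) (w - v) : ℂ)).re ≤ 0) ∧ v - ζ ∈ sf.P ∧
      (inner ℂ v (v - ζ) : ℂ) = 0 := by
  letI : InnerProductSpace ℝ H := InnerProductSpace.complexToReal
  obtain ⟨v, hvP, hmin⟩ := exists_norm_eq_iInf_of_complete_convex
    ⟨0, zero_mem sf⟩ (isClosed sf).isComplete (convex sf) ζ
  have hvar' := (norm_eq_iInf_iff_real_inner_le_zero (convex sf) hvP).1 hmin
  have hvar : ∀ w ∈ sf.P, ((inner ℂ (ζ - v) (w - v) : ℂ)).re ≤ 0 := fun w hw => hvar' w hw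
  have hJv : sf.J v = v := sf.J_fix v hvP
  have h0 : ((inner ℂ (ζ - v) v : ℂ)).re = 0 := by
    have le1 := hvar 0 (zero_mem sf)
    have le2 := hvar ((2:ℝ) • v) (smul_mem sf hvP (by norm_num))
    rw [zero_sub, inner_neg_right] at le1
    have e2 : (2:ℝ) • v - v = v := by
      rw [two_smul]; abel
    rw [e2] at le2
    simp only [Complex.neg_re] at le1
    linarith
  have hperp : ∀ w ∈ sf.P, ((inner ℂ (ζ - v) w : ℂ)).re ≤ 0 := by
    intro w hw
    have e : w = (w - v) + v := by abel
    rw [e, inner_add_right]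
    simp only [Complex.add_re]
    have := hvar w hw
    linarith
  have hJq : sf.J (v - ζ) = v - ζ := by rw [map_sub, hζ, hJv]
  have hmP : v - ζ ∈ sf.P := by
    rw [sf.selfDual]
    intro w hw
    have h1 : 0 ≤ ((inner ℂ (v - ζ) w : ℂ)).re := by
      have := hperp w hw
      have e : (inner ℂ (v - ζ) w : ℂ) = -(inner ℂ (ζ - v) w : ℂ) := by
        rw [← inner_neg_left]; congr 1; abel
      rw [e, Complex.neg_re]
      linarith
    have h2 : ((inner ℂ (v - ζ) w : ℂ)).im = 0 := inner_im_zero_of_fix sf hJq (sf.J_fix w hw)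
    rw [Complex.le_def]
    constructor
    · simpa using h1
    · rw [h2, Complex.zero_im]
  refine ⟨v, hvP, hvar, hmP, ?_⟩
  apply Complex.ext
  · have e : (inner ℂ v (v - ζ) : ℂ) = starRingEnd ℂ (inner ℂ (v - ζ) v : ℂ) :=
      (inner_conj_symm v (v - ζ)).symm
    rw [e, Complex.conj_re]
    have e2 : (inner ℂ (v - ζ) v : ℂ) = -(inner ℂ (ζ - v) v : ℂ) := by
      rw [← inner_neg_left]; congr 1; abel
    rw [e2, Complex.neg_re, h0]
    simp
  · rw [inner_im_zero_of_fix sf hJv hJq, Complex.zero_im]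

lemma exists_proj {ζp ζm : H} (hp : ζp ∈ sf.P) (hm : ζm ∈ sf.P)
    (h0 : (inner ℂ ζp ζm : ℂ) = 0) :
    ∃ p : H →L[ℂ] H, p ∈ A ∧ p ζp = ζp ∧ p ζm = 0 ∧
      ∀ u v : H, (inner ℂ (p u) v : ℂ) = inner ℂ u (p v) := by
  classical
  set K0 : Submodule ℂ H := Submodule.span ℂ {v | ∃ y ∈ A.commutant, y ζp = v} with hK0
  set K : Submodule ℂ H := K0.topologicalClosure with hK
  haveI : CompleteSpace K := K0.isClosed_topologicalClosure.completeSpace_coe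
  set p : H →L[ℂ] H := K.subtypeL.comp (K.orthogonalProjectionOnto) with hpdef
  have hpapp : ∀ u : H, p u = (K.orthogonalProjectionOnto u : H) := fun u => rfl
  have hζpK : ζp ∈ K := by
    apply K0.le_topologicalClosure
    exact Submodule.subset_span ⟨1, one_mem A.commutant, by simp⟩
  have hKm : ∀ u ∈ K, (inner ℂ u ζm : ℂ) = 0 := by
    have hle : K ≤ (ℂ ∙ ζm)ᗮ := by
      apply K0.topologicalClosure_minimal
      · rw [hK0, Submodule.span_le]
        rintro _ ⟨y, hy, rfl⟩
        rw [SetLike.mem_coe, Submodule.mem_orthogonal_singleton_iff_inner_right]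
        rw [← inner_conj_symm, orth' sf hp hm h0 y hy, map_zero]
      · exact Submodule.isClosed_orthogonal _
    intro u hu
    rw [← inner_conj_symm, Submodule.mem_orthogonal_singleton_iff_inner_right.1 (hle hu),
      map_zero]
  have hζm_perp : ζm ∈ Kᗮ := (Submodule.mem_orthogonal K ζm).2 hKm
  have hmaps : ∀ y ∈ A.commutant, ∀ u ∈ K, y u ∈ K := by
    intro y hy u hu
    have h1 : Submodule.map (y : H →ₗ[ℂ] H) K0 ≤ K0 := by
      rw [hK0, Submodule.map_span, Submodule.span_le]
      rintro _ ⟨_, ⟨y', hy', rfl⟩, rfl⟩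
      apply Submodule.subset_span
      exact ⟨y * y', mul_mem hy hy', rfl⟩
    have hu' : u ∈ closure (K0 : Set H) := by
      rwa [← Submodule.topologicalClosure_coe] at *
    have h2 : y u ∈ closure ((y : H → H) '' (K0 : Set H)) :=
      image_closure_subset_closure_image y.continuous ⟨u, hu', rfl⟩
    have h3 : ((y : H → H) '' (K0 : Set H)) ⊆ (K0 : Set H) := by
      rintro _ ⟨z, hz, rfl⟩
      exact h1 ⟨z, hz, rfl⟩
    have := closure_mono h3 h2
    rwa [← Submodule.topologicalClosure_coe] at this
  have hpA : p ∈ A := by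
    rw [← A.commutant_commutant]
    rw [VonNeumannAlgebra.mem_commutant_iff]
    intro y hy
    ext v
    have h1 : y (p v) ∈ K := hmaps y hy _ (by rw [hpapp]; exact (K.orthogonalProjectionOnto v).2)
    have h2 : ∀ w ∈ K, (inner ℂ (y v - y (p v)) w : ℂ) = 0 := by
      intro w hw
      rw [← map_sub]
      have hstar : star y ∈ A.commutant := star_mem hy
      have hadj : (inner ℂ (y (v - p v)) w : ℂ) = inner ℂ (v - p v) ((star y) w) := by
        rw [ContinuousLinearMap.star_eq_adjoint]
        exact (ContinuousLinearMap.adjoint_inner_right y (v - p v) w).symm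
      rw [hadj]
      have hsw : (star y) w ∈ K := hmaps _ hstar w hw
      have hvo : v - p v ∈ Kᗮ := by
        rw [hpapp, ← Submodule.starProjection_apply]
        exact Submodule.sub_starProjection_mem_orthogonal v
      exact Submodule.inner_left_of_mem_orthogonal hsw hvo
    have := Submodule.eq_starProjection_of_mem_of_inner_eq_zero h1 h2
    simp only [ContinuousLinearMap.mul_apply]
    rw [hpapp (y v)]
    exact this.symm
  refine ⟨p, hpA, ?_, ?_, ?_⟩
  · rw [hpapp, ← Submodule.starProjection_apply, Submodule.starProjection_eq_self_iff.2 hζpK]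
  · rw [hpapp, Submodule.orthogonalProjectionOnto_apply_of_mem_orthogonal hζm_perp]
    simp
  · intro u v
    rw [hpapp, hpapp]
    exact Submodule.inner_starProjection_left_eq_right K u v

lemma sub_mem {ξ η : H} (hξ : ξ ∈ sf.P) (hη : η ∈ sf.P)
    (hst : ∀ a ∈ A, (inner ℂ ξ ((a : H →L[ℂ] H) ξ) : ℂ) = inner ℂ η (a η)) :
    η - ξ ∈ sf.P := by
  have hJζ : sf.J (ξ - η) = ξ - η := by
    rw [map_sub, sf.J_fix ξ hξ, sf.J_fix η hη]
  obtain ⟨v, hvP, hvar, hmP, hv0⟩ := moreau sf hJζ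
  obtain ⟨p, hpA, hp1, hp2, hpsa⟩ := exists_proj sf hvP hmP hv0
  have h := hst p hpA
  set ζ : H := ξ - η with hζ
  have hpζ : p ζ = v := by
    have : ζ = v - (v - ζ) := by abel
    rw [this, map_sub, hp1, hp2, sub_zero]
  have hξe : ξ = η + ζ := by rw [hζ]; abel
  rw [hξe] at h
  rw [map_add, inner_add_left, inner_add_right, inner_add_right] at h
  -- h : ⟪η,pη⟫ + ⟪η,pζ⟫ + (⟪ζ,pη⟫ + ⟪ζ,pζ⟫) = ⟪η,pη⟫
  have hsum : (inner ℂ η (p ζ) : ℂ) + (inner ℂ ζ (p η) : ℂ) + (inner ℂ ζ (p ζ) : ℂ) = 0 := by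
    have := h
    ring_nf at this ⊢
    linear_combination this
  rw [hpζ] at hsum
  have e1 : (inner ℂ ζ (p η) : ℂ) = inner ℂ v η := by
    rw [← hpsa, hpζ]
  have e2 : (inner ℂ ζ v : ℂ) = inner ℂ v v := by
    have : ζ = v - (v - ζ) := by abel
    rw [this, inner_sub_left]
    have : (inner ℂ (v - ζ) v : ℂ) = starRingEnd ℂ (inner ℂ v (v - ζ) : ℂ) :=
      (inner_conj_symm (v - ζ) v).symm
    rw [this, hv0, map_zero, sub_zero]
  rw [e1, e2] at hsum
  have n1 : 0 ≤ (inner ℂ η v : ℂ) := inner_nonneg sf hη hvP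
  have n2 : 0 ≤ (inner ℂ v η : ℂ) := inner_nonneg sf hvP hη
  have n3 : 0 ≤ (inner ℂ v v : ℂ) := inner_nonneg sf hvP hvP
  have hvv : (inner ℂ v v : ℂ) = 0 := by
    have h12 : 0 ≤ (inner ℂ η v : ℂ) + (inner ℂ v η : ℂ) := add_nonneg n1 n2
    have : (inner ℂ v v : ℂ) = -((inner ℂ η v : ℂ) + (inner ℂ v η : ℂ)) := by
      linear_combination hsum
    have hz : (inner ℂ v v : ℂ) ≤ 0 := by
      rw [this]; exact neg_nonpos.2 h12
    exact le_antisymm hz n3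
  have hv_zero : v = 0 := inner_self_eq_zero.1 hvv
  have : η - ξ = v - ζ := by rw [hv_zero, hζ]; abel
  rw [this]
  exact hmP

end StandardFormAux

/-- For a von Neumann dynamical system `(A, G, α)`, the canonical
representation `π_A^α` has a nonzero `G`-invariant vector if and only if there is a normal
`G`-invariant state on `A`.  (Normal states on `A` are exactly the vector states `ω_ξ` for
unit vectors `ξ` in the positive cone `P` of the standard form.) -/
theorem exists_invariant_vector_iff_normal_invariant_state
    {G : Type*} [Group G] [TopologicalSpace G] [IsTopologicalGroup G] [LocallyCompactSpace G]
    {H : Type*} [NormedAddCommGroup H] [InnerProductSpace ℂ H] [CompleteSpace H]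
    (A : VonNeumannAlgebra H) (sf : StandardForm A)
    -- π_A^α : the canonical implementation of the action α on L²(A)
    (πA : G →* (H →L[ℂ] H))
    (hπAu : ∀ s, ContinuousLinearMap.adjoint (πA s) = πA s⁻¹)
    (hπAc : ∀ ξ : H, Continuous fun s => πA s ξ)
    (hπAP : ∀ s : G, ∀ ξ ∈ sf.P, πA s ξ ∈ sf.P)
    (hπAJ : ∀ (s : G) (ξ : H), πA s (sf.J ξ) = sf.J (πA s ξ))
    (hπA_A : ∀ s : G, ∀ a ∈ A, πA s * a * πA s⁻¹ ∈ A) :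
    (∃ ξ : H, ξ ≠ 0 ∧ ∀ s : G, πA s ξ = ξ) ↔
      (∃ ξ ∈ sf.P, ‖ξ‖ = 1 ∧
        ∀ s : G, ∀ a ∈ A, (inner ℂ ξ ((πA s * a * πA s⁻¹) ξ) : ℂ) = inner ℂ ξ (a ξ)) := by
  have hmul : ∀ (s t : G) (u : H), πA s (πA t u) = πA (s * t) u := by
    intro s t u; rw [map_mul]; rfl
  have hcomp : ∀ (s : G) (u : H), πA s (πA s⁻¹ u) = u := by
    intro s u; rw [hmul, mul_inv_cancel, map_one]; rfl
  have hiso : ∀ (s : G) (x y : H), (inner ℂ (πA s x) (πA s y) : ℂ) = inner ℂ x y := by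
    intro s x y
    rw [← ContinuousLinearMap.adjoint_inner_left (πA s), hπAu, hmul, inv_mul_cancel, map_one]
    rfl
  constructor
  · rintro ⟨ξ0, hne, hinv⟩
    obtain ⟨ζ, hζne, hζJ, hζinv⟩ :
        ∃ ζ : H, ζ ≠ 0 ∧ sf.J ζ = ζ ∧ ∀ s, πA s ζ = ζ := by
      by_cases hcase : ξ0 + sf.J ξ0 = 0
      · have hJξ : sf.J ξ0 = -ξ0 := by
          rw [eq_neg_iff_add_eq_zero, add_comm]; exact hcase
        refine ⟨Complex.I • (sf.J ξ0 - ξ0), ?_, ?_, ?_⟩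
        · have : sf.J ξ0 - ξ0 ≠ 0 := by
            rw [hJξ]
            intro hcontra
            apply hne
            have h2 : (2:ℝ) • ξ0 = 0 := by
              rw [two_smul]
              have : -ξ0 - ξ0 = -(ξ0 + ξ0) := by abel
              rw [this] at hcontra
              simpa using neg_eq_zero.1 hcontra
            rcases smul_eq_zero.1 h2 with h | h
            · norm_num at h
            · exact h
          exact smul_ne_zero Complex.I_ne_zero this
        · rw [sf.J.map_smulₛₗ, map_sub, sf.J_involutive]
          simp only [Complex.star_def, Complex.conj_I]
          rw [neg_smul, ← smul_neg]
          congr 1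
          abel
        · intro s
          rw [map_smul, map_sub, hπAJ, hinv]
      · refine ⟨ξ0 + sf.J ξ0, hcase, ?_, ?_⟩
        · rw [map_add, sf.J_involutive]; abel
        · intro s
          rw [map_add, hπAJ, hinv]
    obtain ⟨v, hvP, hvar, hmP, hv0⟩ := StandardFormAux.moreau sf hζJ
    have hviso : ∀ s, πA s v = v := by
      intro s
      have hvs : πA s v ∈ sf.P := hπAP s v hvP
      have h1 : (inner ℂ (ζ - v) (πA s v - v) : ℂ).re ≤ 0 := hvar _ hvs
      have h2 : (inner ℂ (ζ - πA s v) (v - πA s v) : ℂ).re ≤ 0 := by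
        have e : (inner ℂ (ζ - πA s v) (v - πA s v) : ℂ)
            = inner ℂ (ζ - v) (πA s⁻¹ v - v) := by
          have e1 : ζ - πA s v = πA s (ζ - v) := by rw [map_sub, hζinv]
          have e2 : v - πA s v = πA s (πA s⁻¹ v - v) := by rw [map_sub, hcomp]
          rw [e1, e2, hiso]
        rw [e]
        exact hvar _ (hπAP s⁻¹ v hvP)
      have h3 : (inner ℂ (πA s v - v) (πA s v - v) : ℂ).re ≤ 0 := by
        have e : (inner ℂ (πA s v - v) (πA s v - v) : ℂ)
            = inner ℂ (ζ - v) (πA s v - v) - inner ℂ (ζ - πA s v) (πA s v - v) := by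
          rw [← inner_sub_left]; congr 1; abel
        have e2 : (inner ℂ (ζ - πA s v) (πA s v - v) : ℂ)
            = -inner ℂ (ζ - πA s v) (v - πA s v) := by
          rw [← inner_neg_right]; congr 1; abel
        rw [e, e2]
        simp only [Complex.sub_re, Complex.neg_re]
        linarith
      have h4 : (inner ℂ (πA s v - v) (πA s v - v) : ℂ) = ((‖πA s v - v‖ : ℂ)) ^ 2 :=
        inner_self_eq_norm_sq_to_K _
      rw [h4] at h3
      have h5 : ((‖πA s v - v‖ : ℂ) ^ 2).re = ‖πA s v - v‖ ^ 2 := by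
        norm_cast
      rw [h5] at h3
      have h6 : ‖πA s v - v‖ = 0 := by
        have := norm_nonneg (πA s v - v)
        nlinarith
      exact sub_eq_zero.1 (norm_eq_zero.1 h6)
    obtain ⟨ρ0, hρ0P, hρ0ne, hρ0inv⟩ : ∃ ρ0, ρ0 ∈ sf.P ∧ ρ0 ≠ 0 ∧ ∀ s, πA s ρ0 = ρ0 := by
      by_cases hv : v = 0
      · refine ⟨v - ζ, hmP, ?_, ?_⟩
        · rw [hv, zero_sub]
          exact neg_ne_zero.2 hζne
        · intro s; rw [map_sub, hviso, hζinv]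
      · exact ⟨v, hvP, hv, hviso⟩
    set ρ : H := (‖ρ0‖⁻¹ : ℝ) • ρ0 with hρ
    have hρP : ρ ∈ sf.P := StandardFormAux.smul_mem sf hρ0P (by positivity)
    have hρn : ‖ρ‖ = 1 := by
      rw [hρ, norm_smul, Real.norm_eq_abs, abs_of_nonneg (by positivity),
        inv_mul_cancel₀ (norm_ne_zero_iff.2 hρ0ne)]
    have hρinv : ∀ s, πA s ρ = ρ := by
      intro s
      rw [hρ, ContinuousLinearMap.map_smul_of_tower, hρ0inv]
    refine ⟨ρ, hρP, hρn, ?_⟩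
    intro s a _
    have e : (πA s * a * πA s⁻¹) ρ = πA s (a (πA s⁻¹ ρ)) := rfl
    rw [e, hρinv s⁻¹, ← ContinuousLinearMap.adjoint_inner_left (πA s), hπAu, hρinv s⁻¹]
  · rintro ⟨ξ, hξP, hξn, hst⟩
    have hξne : ξ ≠ 0 := by
      intro h
      rw [h, norm_zero] at hξn
      norm_num at hξn
    refine ⟨ξ, hξne, ?_⟩
    have key : ∀ s : G, πA s⁻¹ ξ = ξ := by
      intro s
      set η := πA s⁻¹ ξ with hη
      have hηP : η ∈ sf.P := hπAP s⁻¹ ξ hξP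
      have hstate : ∀ a ∈ A, (inner ℂ ξ ((a : H →L[ℂ] H) ξ) : ℂ) = inner ℂ η (a η) := by
        intro a ha
        have h := hst s a ha
        have e : (πA s * a * πA s⁻¹) ξ = πA s (a η) := rfl
        rw [e] at h
        rw [← h, ← ContinuousLinearMap.adjoint_inner_left (πA s), hπAu]
      have d1 : η - ξ ∈ sf.P := StandardFormAux.sub_mem sf hξP hηP hstate
      have d2 : ξ - η ∈ sf.P :=
        StandardFormAux.sub_mem sf hηP hξP (fun a ha => (hstate a ha).symm)
      have h1 : 0 ≤ (inner ℂ (ξ - η) (η - ξ) : ℂ) := StandardFormAux.inner_nonneg sf d2 d1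
      have h2 : (inner ℂ (ξ - η) (η - ξ) : ℂ) = -inner ℂ (ξ - η) (ξ - η) := by
        rw [← inner_neg_right]; congr 1; abel
      rw [h2, inner_self_eq_norm_sq_to_K] at h1
      have hre : (0:ℝ) ≤ (-((‖ξ - η‖ : ℂ) ^ 2)).re := by
        have := h1.1
        simpa using this
      have hre2 : (-((‖ξ - η‖ : ℂ) ^ 2)).re = -(‖ξ - η‖ ^ 2) := by norm_cast
      have h4 : ‖ξ - η‖ = 0 := by nlinarith [norm_nonneg (ξ - η)]
      exact ((sub_eq_zero.1 (norm_eq_zero.1 h4)).symm :)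
    intro s
    have := key s⁻¹
    rwa [inv_inv] at this
end
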